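/- Semigroup/Chapman–Kolmogorov property of the transition kernel G: with deterministic nonnegative intensities λ_{EF} satisfying λ_{EF}=0 unless F=E∪{i} for i∉E, define G(s,t;E,F) as in the paper: G(s,t;E,E)=exp(−∫_s^t λ_E(u)du) with λ_E = ∑_{i∉E} λ_{E,E∪{i}}, and for E ⊂ F, G(s,t;E,F) = ∑_{π ∈ Π(F/E)} H_{|F/E|}(s,t;F_0^π,…,F^π_{|F/E|}) where H is the iterated integral H_{k+1}(s,t;F₀,…,F_{k+1}) = ∫_s^t λ_{F_k F_{k+1}}(v) e^{−∫_v^t λ_{F_{k+1}}(u)du} H_k(s,v;F₀,…,F_k) dv and H₀(s,t;E)=e^{−∫_s^t λ_E(u)du}. Then for 0 ≤ s ≤ u ≤ t and E ⊆ F: G(s,t;E,F) = ∑_{E ⊆ D ⊆ F} G(s,u;E,D) · G(u,t;D,F). -/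

import Mathlib

open Finset MeasureTheory intervalIntegral

/-- Total intensity `λ_E = ∑_{i ∉ E} λ_{E, E∪{i}}` out of the defaulted set `E`. -/
noncomputable def lamTot {ι : Type*} [Fintype ι] [DecidableEq ι]
    (lam : Finset ι → Finset ι → ℝ → ℝ) (E : Finset ι) (t : ℝ) : ℝ :=
  ∑ i ∈ Eᶜ, lam E (insert i E) t

/-- The iterated-integral functional `H` along a default ordering (equations
(3.5)–(3.7) of the paper, written via the first default after `s`):
`H(E, [], s, t) = e^{−∫_s^t λ_E}` and
`H(E, i::L, s, t) = ∫_s^t e^{−∫_s^v λ_E} λ_{E,E∪{i}}(v) H(E∪{i}, L, v, t) dv`. -/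
noncomputable def Hchain {ι : Type*} [Fintype ι] [DecidableEq ι]
    (lam : Finset ι → Finset ι → ℝ → ℝ) : Finset ι → List ι → ℝ → ℝ → ℝ
  | E, [], s, t => Real.exp (-(∫ u in s..t, lamTot lam E u))
  | E, i :: L, s, t =>
      ∫ v in s..t, Real.exp (-(∫ u in s..v, lamTot lam E u))
        * lam E (insert i E) v * Hchain lam (insert i E) L v t

/-- The transition kernel `G(s,t;E,F) = ∑_{π ∈ Π(F∖E)} H_{|F∖E|}(s,t;F₀^π,…)`
(with `G(s,t;E,E) = e^{−∫_s^t λ_E}`). -/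
noncomputable def Gker {ι : Type*} [Fintype ι] [DecidableEq ι]
    (lam : Finset ι → Finset ι → ℝ → ℝ) (E F : Finset ι) (s t : ℝ) : ℝ :=
  (((F \ E).toList.permutations).map (fun L => Hchain lam E L s t)).sum

section CKaux
variable {ι : Type*} [Fintype ι] [DecidableEq ι]
variable {lam : Finset ι → Finset ι → ℝ → ℝ}
variable (hint : ∀ (E F : Finset ι) (a b : ℝ),
    IntervalIntegrable (lam E F) MeasureTheory.volume a b)

/-- primitive of the total intensity -/
noncomputable def Pf (lam : Finset ι → Finset ι → ℝ → ℝ) (E : Finset ι) (v : ℝ) : ℝ :=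
  ∫ u in (0:ℝ)..v, lamTot lam E u

include hint

lemma lamTot_intInt (E : Finset ι) (a b : ℝ) :
    IntervalIntegrable (lamTot lam E) MeasureTheory.volume a b := by
  have h : lamTot lam E = ∑ i ∈ Eᶜ, (fun t => lam E (insert i E) t) := by
    funext t; simp [lamTot]
  rw [h]
  exact IntervalIntegrable.sum _ fun i _ => hint E (insert i E) a b

lemma Pf_cont (E : Finset ι) : Continuous (Pf lam E) :=
  intervalIntegral.continuous_primitive (fun a b => lamTot_intInt hint E a b) 0

lemma integral_lamTot_eq (E : Finset ι) (a b : ℝ) :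
    ∫ u in a..b, lamTot lam E u = Pf lam E b - Pf lam E a :=
  (integral_interval_sub_left (lamTot_intInt hint E 0 b) (lamTot_intInt hint E 0 a)).symm

lemma exp_integral (E : Finset ι) (a b : ℝ) :
    Real.exp (-(∫ u in a..b, lamTot lam E u))
      = Real.exp (Pf lam E a) * Real.exp (-(Pf lam E b)) := by
  rw [integral_lamTot_eq hint, ← Real.exp_add]; ring_nf

lemma exp_cont (E : Finset ι) (s : ℝ) :
    Continuous fun v => Real.exp (-(∫ u in s..v, lamTot lam E u)) := by
  have h : (fun v => Real.exp (-(∫ u in s..v, lamTot lam E u)))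
      = fun v => Real.exp (Pf lam E s) * Real.exp (-(Pf lam E v)) := by
    funext v; rw [exp_integral hint]
  rw [h]
  exact continuous_const.mul ((Pf_cont hint E).neg.rexp)

lemma Hchain_cons (E : Finset ι) (i : ι) (L : List ι) (s t : ℝ) :
    Hchain lam E (i :: L) s t
      = Real.exp (Pf lam E s) *
        ∫ v in s..t, Real.exp (-(Pf lam E v)) * lam E (insert i E) v
          * Hchain lam (insert i E) L v t := by
  rw [Hchain, ← intervalIntegral.integral_const_mul]
  refine intervalIntegral.integral_congr fun v _ => ?_
  rw [exp_integral hint]; ring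

lemma Hchain_cont (L : List ι) : ∀ (E : Finset ι) (t : ℝ),
    Continuous fun v => Hchain lam E L v t := by
  induction L with
  | nil =>
    intro E t
    have h : (fun v => Hchain lam E [] v t)
        = fun v => Real.exp (Pf lam E v) * Real.exp (-(Pf lam E t)) := by
      funext v; rw [Hchain, exp_integral hint]
    rw [h]
    exact ((Pf_cont hint E).rexp).mul continuous_const
  | cons i L ih =>
    intro E t
    have hg : ∀ a b : ℝ, IntervalIntegrable
        (fun w => Real.exp (-(Pf lam E w)) * lam E (insert i E) w
          * Hchain lam (insert i E) L w t) MeasureTheory.volume a b := fun a b =>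
      ((hint E (insert i E) a b).continuousOn_mul
        ((Pf_cont hint E).neg.rexp.continuousOn)).mul_continuousOn
        (ih (insert i E) t).continuousOn
    have h : (fun v => Hchain lam E (i :: L) v t)
        = fun v => Real.exp (Pf lam E v) *
            ((∫ w in (0:ℝ)..t, Real.exp (-(Pf lam E w)) * lam E (insert i E) w
              * Hchain lam (insert i E) L w t)
            - ∫ w in (0:ℝ)..v, Real.exp (-(Pf lam E w)) * lam E (insert i E) w
              * Hchain lam (insert i E) L w t) := by
      funext v
      rw [Hchain_cons hint, integral_interval_sub_left (hg 0 t) (hg 0 v)]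
    rw [h]
    exact ((Pf_cont hint E).rexp).mul (continuous_const.sub
      (intervalIntegral.continuous_primitive hg 0))

lemma intInt_eGk (E A : Finset ι) (h : ℝ → ℝ) (hh : Continuous h) (s a b : ℝ) :
    IntervalIntegrable (fun v => Real.exp (-(∫ u in s..v, lamTot lam E u))
      * lam E A v * h v) MeasureTheory.volume a b :=
  ((hint E A a b).continuousOn_mul (exp_cont hint E s).continuousOn).mul_continuousOn
    hh.continuousOn

omit hint

/-- all orderings of a finset, as a finset of lists -/
noncomputable def permsF (S : Finset ι) : Finset (List ι) := S.toList.permutations.toFinset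

lemma mem_permsF {S : Finset ι} {L : List ι} :
    L ∈ permsF S ↔ (L : Multiset ι) = S.val := by
  rw [permsF, List.mem_toFinset, List.mem_permutations, ← Multiset.coe_eq_coe,
    Finset.coe_toList]

include hint

lemma Gker_eq_sum (E F : Finset ι) (s t : ℝ) :
    Gker lam E F s t = ∑ L ∈ permsF (F \ E), Hchain lam E L s t := by
  rw [Gker, permsF, List.sum_toFinset _ (List.nodup_permutations _ (Finset.nodup_toList _))]

lemma Gker_self (E : Finset ι) (s t : ℝ) :
    Gker lam E E s t = Real.exp (-(∫ u in s..t, lamTot lam E u)) := by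
  simp [Gker, Hchain, Finset.sdiff_self]

lemma Gker_cont (E F : Finset ι) (t : ℝ) :
    Continuous fun v => Gker lam E F v t := by
  have h : (fun v => Gker lam E F v t)
      = fun v => ∑ L ∈ permsF (F \ E), Hchain lam E L v t := by
    funext v; rw [Gker_eq_sum hint]
  rw [h]
  exact continuous_finset_sum _ fun L _ => Hchain_cont hint L E t

omit hint

lemma sum_permsF_nonempty {S : Finset ι} (hS : S.Nonempty) (g : List ι → ℝ) :
    ∑ L ∈ permsF S, g L = ∑ i ∈ S, ∑ L ∈ permsF (S.erase i), g (i :: L) := by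
  let i0 := hS.choose
  rw [Finset.sum_sigma']
  refine Finset.sum_nbij' (fun L => (⟨L.headD i0, L.tail⟩ : Σ _ : ι, List ι))
    (fun p => p.1 :: p.2) ?_ ?_ ?_ ?_ ?_
  · -- forward membership
    intro L hL
    rw [mem_permsF] at hL
    cases L with
    | nil =>
      exact absurd (Finset.val_eq_zero.mp hL.symm) hS.ne_empty
    | cons a l =>
      rw [Finset.mem_sigma]
      constructor
      · have : a ∈ S.val := by
          rw [← hL]; exact Multiset.mem_cons_self a l
        exact this
      · rw [mem_permsF, Finset.erase_val]
        show (l : Multiset ι) = S.val.erase a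
        rw [← hL]
        exact (Multiset.erase_cons_head a l).symm
  · -- backward membership
    intro p hp
    rw [Finset.mem_sigma] at hp
    obtain ⟨hp1, hp2⟩ := hp
    rw [mem_permsF] at hp2 ⊢
    rw [Finset.erase_val] at hp2
    show (p.1 ::ₘ (p.2 : Multiset ι)) = S.val
    rw [hp2]
    exact Multiset.cons_erase hp1
  · -- left inverse
    intro L hL
    rw [mem_permsF] at hL
    cases L with
    | nil => exact absurd (Finset.val_eq_zero.mp hL.symm) hS.ne_empty
    | cons a l => rfl
  · -- right inverse
    intro p _; rfl
  · -- value compatibility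
    intro L hL
    rw [mem_permsF] at hL
    cases L with
    | nil => exact absurd (Finset.val_eq_zero.mp hL.symm) hS.ne_empty
    | cons a l => rfl

include hint

lemma Gker_rec (E F : Finset ι) (hne : (F \ E).Nonempty) (s t : ℝ) :
    Gker lam E F s t = ∑ i ∈ F \ E, ∫ v in s..t,
      Real.exp (-(∫ w in s..v, lamTot lam E w)) * lam E (insert i E) v
        * Gker lam (insert i E) F v t := by
  rw [Gker_eq_sum hint, sum_permsF_nonempty hne]
  refine Finset.sum_congr rfl fun i hi => ?_
  have hfd : F \ insert i E = (F \ E).erase i := by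
    ext j
    simp only [Finset.mem_sdiff, Finset.mem_insert, Finset.mem_erase, not_or]
    tauto
  calc ∑ L ∈ permsF ((F \ E).erase i), Hchain lam E (i :: L) s t
      = ∑ L ∈ permsF ((F \ E).erase i), ∫ v in s..t,
          Real.exp (-(∫ w in s..v, lamTot lam E w)) * lam E (insert i E) v
            * Hchain lam (insert i E) L v t := by
        refine Finset.sum_congr rfl fun L _ => ?_
        rw [Hchain]
    _ = ∫ v in s..t, ∑ L ∈ permsF ((F \ E).erase i),
          Real.exp (-(∫ w in s..v, lamTot lam E w)) * lam E (insert i E) v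
            * Hchain lam (insert i E) L v t :=
        (intervalIntegral.integral_finset_sum (fun L _ =>
          intInt_eGk hint E (insert i E) _ (Hchain_cont hint L _ t) s s t)).symm
    _ = ∫ v in s..t, Real.exp (-(∫ w in s..v, lamTot lam E w)) * lam E (insert i E) v
          * Gker lam (insert i E) F v t := by
        refine intervalIntegral.integral_congr fun v _ => ?_
        rw [Gker_eq_sum hint, hfd, Finset.mul_sum]

lemma CK_self (E : Finset ι) (s u t : ℝ) :
    Gker lam E E s t = ∑ D ∈ Finset.Icc E E, Gker lam E D s u * Gker lam D E u t := by
  rw [Finset.Icc_self, Finset.sum_singleton, Gker_self hint, Gker_self hint, Gker_self hint,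
    ← Real.exp_add, ← neg_add,
    intervalIntegral.integral_add_adjacent_intervals (lamTot_intInt hint E s u)
      (lamTot_intInt hint E u t)]

lemma CK_aux : ∀ n : ℕ, ∀ E F : Finset ι, E ⊆ F → (F \ E).card ≤ n →
    ∀ s u t : ℝ, s ≤ u → u ≤ t →
    Gker lam E F s t = ∑ D ∈ Finset.Icc E F, Gker lam E D s u * Gker lam D F u t := by
  intro n
  induction n with
  | zero =>
    intro E F hEF hcard s u t hsu hut
    have hFE : F = E := by
      have h0 : F \ E = ∅ := Finset.card_eq_zero.mp (Nat.le_zero.mp hcard)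
      exact Finset.Subset.antisymm (Finset.sdiff_eq_empty_iff_subset.mp h0) hEF
    subst hFE
    exact CK_self hint F s u t
  | succ n ih =>
    intro E F hEF hcard s u t hsu hut
    by_cases hEq : F = E
    · subst hEq; exact CK_self hint F s u t
    have hne : (F \ E).Nonempty := by
      rw [Finset.sdiff_nonempty]
      exact fun h => hEq (Finset.Subset.antisymm h hEF)
    have hXi : ∀ (A D : Finset ι) (t' a b : ℝ),
        IntervalIntegrable (fun v => Real.exp (-(∫ w in s..v, lamTot lam E w))
          * lam E A v * Gker lam A D v t') MeasureTheory.volume a b :=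
      fun A D t' a b => intInt_eGk hint E A _ (Gker_cont hint A D t') s a b
    have hpart2 : ∑ i ∈ F \ E, (∫ v in u..t,
          Real.exp (-(∫ w in s..v, lamTot lam E w)) * lam E (insert i E) v
            * Gker lam (insert i E) F v t)
        = Gker lam E E s u * Gker lam E F u t := by
      rw [Gker_self hint, Gker_rec hint E F hne u t, Finset.mul_sum]
      refine Finset.sum_congr rfl fun i _ => ?_
      rw [← intervalIntegral.integral_const_mul]
      refine intervalIntegral.integral_congr fun v _ => ?_
      have hadd : ∫ w in s..v, lamTot lam E w
          = (∫ w in s..u, lamTot lam E w) + ∫ w in u..v, lamTot lam E w :=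
        (intervalIntegral.integral_add_adjacent_intervals (lamTot_intInt hint E s u)
          (lamTot_intInt hint E u v)).symm
      rw [hadd, neg_add, Real.exp_add]; ring
    have hstep : ∀ i ∈ F \ E,
        (∫ v in s..u, Real.exp (-(∫ w in s..v, lamTot lam E w)) * lam E (insert i E) v
            * Gker lam (insert i E) F v t)
        = ∑ D ∈ Finset.Icc (insert i E) F,
            (∫ v in s..u, Real.exp (-(∫ w in s..v, lamTot lam E w)) * lam E (insert i E) v
              * Gker lam (insert i E) D v u) * Gker lam D F u t := by
      intro i hi
      have hiF : i ∈ F := (Finset.mem_sdiff.1 hi).1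
      have hsub : insert i E ⊆ F := Finset.insert_subset hiF hEF
      have hfd : F \ insert i E = (F \ E).erase i := by
        ext j
        simp only [Finset.mem_sdiff, Finset.mem_insert, Finset.mem_erase, not_or]
        tauto
      have hcard' : (F \ insert i E).card ≤ n := by
        rw [hfd, Finset.card_erase_of_mem hi]
        omega
      calc (∫ v in s..u, Real.exp (-(∫ w in s..v, lamTot lam E w)) * lam E (insert i E) v
              * Gker lam (insert i E) F v t)
          = ∫ v in s..u, Real.exp (-(∫ w in s..v, lamTot lam E w)) * lam E (insert i E) v
              * (∑ D ∈ Finset.Icc (insert i E) F,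
                  Gker lam (insert i E) D v u * Gker lam D F u t) := by
            refine intervalIntegral.integral_congr fun v hv => ?_
            rw [Set.uIcc_of_le hsu] at hv
            rw [ih (insert i E) F hsub hcard' v u t hv.2 hut]
        _ = ∫ v in s..u, ∑ D ∈ Finset.Icc (insert i E) F,
              Real.exp (-(∫ w in s..v, lamTot lam E w)) * lam E (insert i E) v
                * (Gker lam (insert i E) D v u * Gker lam D F u t) := by
            refine intervalIntegral.integral_congr fun v _ => ?_
            rw [Finset.mul_sum]
        _ = ∑ D ∈ Finset.Icc (insert i E) F, ∫ v in s..u,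
              Real.exp (-(∫ w in s..v, lamTot lam E w)) * lam E (insert i E) v
                * (Gker lam (insert i E) D v u * Gker lam D F u t) :=
            intervalIntegral.integral_finset_sum (fun D _ =>
              intInt_eGk hint E (insert i E)
                (fun v => Gker lam (insert i E) D v u * Gker lam D F u t)
                ((Gker_cont hint _ _ u).mul continuous_const) s s u)
        _ = ∑ D ∈ Finset.Icc (insert i E) F,
              (∫ v in s..u, Real.exp (-(∫ w in s..v, lamTot lam E w)) * lam E (insert i E) v
                * Gker lam (insert i E) D v u) * Gker lam D F u t := by
            refine Finset.sum_congr rfl fun D _ => ?_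
            rw [← intervalIntegral.integral_mul_const]
            refine intervalIntegral.integral_congr fun v _ => ?_
            ring
    have hmem : ∀ (i : ι) (D : Finset ι),
        (i ∈ F \ E ∧ D ∈ Finset.Icc (insert i E) F)
          ↔ (i ∈ D \ E ∧ D ∈ (Finset.Icc E F).erase E) := by
      intro i D
      simp only [Finset.mem_sdiff, Finset.mem_Icc, Finset.mem_erase, Finset.le_iff_subset,
        Finset.insert_subset_iff]
      constructor
      · rintro ⟨⟨hiF, hiE⟩, ⟨hiD, hED⟩, hDF⟩
        refine ⟨⟨hiD, hiE⟩, ?_, hED, hDF⟩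
        intro hDE; subst hDE; exact hiE hiD
      · rintro ⟨⟨hiD, hiE⟩, _, hED, hDF⟩
        exact ⟨⟨hDF hiD, hiE⟩, ⟨hiD, hED⟩, hDF⟩
    have hpart1 : ∑ i ∈ F \ E, (∫ v in s..u,
          Real.exp (-(∫ w in s..v, lamTot lam E w)) * lam E (insert i E) v
            * Gker lam (insert i E) F v t)
        = ∑ D ∈ (Finset.Icc E F).erase E, Gker lam E D s u * Gker lam D F u t := by
      rw [Finset.sum_congr rfl hstep,
        Finset.sum_comm' (s' := fun D => D \ E) (t' := (Finset.Icc E F).erase E) hmem]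
      refine Finset.sum_congr rfl fun D hD => ?_
      obtain ⟨hDne, hDm⟩ := Finset.mem_erase.1 hD
      have hED : E ⊆ D := (Finset.mem_Icc.1 hDm).1
      have hneD : (D \ E).Nonempty := by
        rw [Finset.sdiff_nonempty]
        exact fun h => hDne (Finset.Subset.antisymm h hED)
      rw [← Finset.sum_mul, ← Gker_rec hint E D hneD s u]
    calc Gker lam E F s t
        = ∑ i ∈ F \ E, ∫ v in s..t,
            Real.exp (-(∫ w in s..v, lamTot lam E w)) * lam E (insert i E) v
              * Gker lam (insert i E) F v t := Gker_rec hint E F hne s t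
      _ = ∑ i ∈ F \ E, ((∫ v in s..u,
            Real.exp (-(∫ w in s..v, lamTot lam E w)) * lam E (insert i E) v
              * Gker lam (insert i E) F v t)
          + ∫ v in u..t,
            Real.exp (-(∫ w in s..v, lamTot lam E w)) * lam E (insert i E) v
              * Gker lam (insert i E) F v t) := by
          refine Finset.sum_congr rfl fun i _ => ?_
          exact (intervalIntegral.integral_add_adjacent_intervals
            (hXi _ _ _ s u) (hXi _ _ _ u t)).symm
      _ = (∑ D ∈ (Finset.Icc E F).erase E, Gker lam E D s u * Gker lam D F u t)
          + Gker lam E E s u * Gker lam E F u t := by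
          rw [Finset.sum_add_distrib, hpart1, hpart2]
      _ = ∑ D ∈ Finset.Icc E F, Gker lam E D s u * Gker lam D F u t :=
          Finset.sum_erase_add _ _ (Finset.mem_Icc.mpr ⟨le_refl E, hEF⟩)

end CKaux

/-- Chapman–Kolmogorov / semigroup property of the transition kernel `G`. -/
theorem Gker_chapman_kolmogorov {ι : Type*} [Fintype ι] [DecidableEq ι]
    (lam : Finset ι → Finset ι → ℝ → ℝ)
    (hnn : ∀ E F t, 0 ≤ lam E F t)
    (hstruct : ∀ E F : Finset ι, (¬ ∃ i ∉ E, F = insert i E) → ∀ t, lam E F t = 0)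
    (hint : ∀ (E F : Finset ι) (a b : ℝ),
      IntervalIntegrable (lam E F) MeasureTheory.volume a b)
    (E F : Finset ι) (hEF : E ⊆ F) (s u t : ℝ) (hs : 0 ≤ s) (hsu : s ≤ u)
    (hut : u ≤ t) :
    Gker lam E F s t = ∑ D ∈ Finset.Icc E F, Gker lam E D s u * Gker lam D F u t :=
  CK_aux hint ((F \ E).card) E F hEF le_rfl s u t hsu hut
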